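/- Let A be an m×n real matrix such that the system A·X = 0 has no nonzero nonnegative solution X ∈ ℝⁿ (X ≥ 0 componentwise and X ≠ 0). Then there exists an invertible m×m real matrix P such that B = P·A has all entries nonnegative and no column of B is identically zero. -/

import Mathlib

open Matrix Finset

theorem stmt_6 {m n : ℕ} (A : Matrix (Fin m) (Fin n) ℝ)
    (hA : ∀ X : Fin n → ℝ, A.mulVec X = 0 → (∀ i, 0 ≤ X i) → X = 0) :
    ∃ P : Matrix (Fin m) (Fin m) ℝ, IsUnit P ∧
      (∀ i j, 0 ≤ (P * A) i j) ∧ (∀ j, ∃ i, (P * A) i j ≠ 0) := by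
  -- Step 1: Stiemke-type lemma via separation
  obtain ⟨y, hy⟩ : ∃ y : Fin m → ℝ, ∀ j, 0 < ∑ i, y i * A i j := by
    set K := A.mulVecLin '' stdSimplex ℝ (Fin n) with hKdef
    have hconv : Convex ℝ K := (convex_stdSimplex ℝ (Fin n)).linear_image A.mulVecLin
    have hcomp : IsCompact K :=
      (isCompact_stdSimplex ℝ (Fin n)).image A.mulVecLin.continuous_of_finiteDimensional
    have h0 : (0 : Fin m → ℝ) ∉ K := by
      rintro ⟨x, hx, hx0⟩
      have hxz : x = 0 := hA x hx0 hx.1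
      rw [hxz] at hx
      simpa using hx.2
    obtain ⟨f, u, hu0, hu⟩ := geometric_hahn_banach_point_closed hconv hcomp.isClosed h0
    refine ⟨fun i => f (Pi.single i 1), fun j => ?_⟩
    have hcol : (fun i => A i j) ∈ K := by
      refine ⟨Pi.single j 1, single_mem_stdSimplex ℝ j, ?_⟩
      simp [Matrix.mulVecLin_apply]
      rfl
    have h1 : 0 < f (fun i => A i j) := by
      have := hu _ hcol
      have h00 : f 0 = 0 := map_zero f
      rw [h00] at hu0
      linarith
    have hsingle : ∀ i : Fin m, ((fun k => if i = k then (1:ℝ) else 0) : Fin m → ℝ)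
        = Pi.single i 1 := by
      intro i; funext k; by_cases h : i = k <;> simp [Pi.single_apply, h, eq_comm]
    have hrep : f (fun i => A i j) = ∑ i, A i j * f (Pi.single i 1) := by
      have h := (f : (Fin m → ℝ) →ₗ[ℝ] ℝ).pi_apply_eq_sum_univ (fun i => A i j)
      simp only [smul_eq_mul, hsingle] at h
      exact h
    rw [hrep] at h1
    calc (0:ℝ) < ∑ i, A i j * f (Pi.single i 1) := h1
      _ = ∑ i, f (Pi.single i 1) * A i j := by
          exact Finset.sum_congr rfl fun i _ => mul_comm _ _
  -- Step 2: build P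
  set c : Fin n → ℝ := fun j => ∑ i, y i * A i j with hc
  set s : ℝ := ∑ i, y i with hs
  set t₁ : ℝ := 1 + ∑ i : Fin m, ∑ j : Fin n, |A i j| / c j with ht₁
  have hterm : ∀ i j, (0:ℝ) ≤ |A i j| / c j := fun i j => div_nonneg (abs_nonneg _) (hy j).le
  have ht₁ge : ∀ i j, 1 + |A i j| / c j ≤ t₁ := by
    intro i j
    have h1 : |A i j| / c j ≤ ∑ i' : Fin m, ∑ j' : Fin n, |A i' j'| / c j' := by
      calc |A i j| / c j ≤ ∑ j' : Fin n, |A i j'| / c j' :=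
            Finset.single_le_sum (fun j' _ => hterm i j') (Finset.mem_univ j)
        _ ≤ ∑ i' : Fin m, ∑ j' : Fin n, |A i' j'| / c j' :=
            Finset.single_le_sum (f := fun i' => ∑ j' : Fin n, |A i' j'| / c j')
              (fun i' _ => Finset.sum_nonneg fun j' _ => hterm i' j') (Finset.mem_univ i)
    simpa [ht₁] using add_le_add_left h1 1
  have hpos : ∀ t, t₁ ≤ t → ∀ i j, 0 < A i j + t * c j := by
    intro t ht i j
    have hcj := hy j
    have h2 : (1 + |A i j| / c j) * c j ≤ t * c j :=
      mul_le_mul_of_nonneg_right ((ht₁ge i j).trans ht) hcj.le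
    have h3 : (1 + |A i j| / c j) * c j = c j + |A i j| := by
      rw [add_mul, one_mul, div_mul_cancel₀ _ (show c j ≠ 0 from hcj.ne')]
    nlinarith [abs_nonneg (A i j), neg_abs_le (A i j)]
  obtain ⟨t, htge, htD⟩ : ∃ t : ℝ, t₁ ≤ t ∧ 1 + t * s ≠ 0 := by
    by_cases h : 1 + t₁ * s = 0
    · refine ⟨t₁ + 1, by linarith, ?_⟩
      have hs0 : s ≠ 0 := by
        intro h0; rw [h0] at h; simp at h
      intro h'
      have : s = 0 := by nlinarith
      exact hs0 this
    · exact ⟨t₁, le_refl _, h⟩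
  set V : Matrix (Fin m) (Fin m) ℝ := vecMulVec (fun _ => 1) y with hV
  have hVV : V * V = s • V := by
    ext i j
    simp [hV, Matrix.mul_apply, vecMulVec_apply, hs, Finset.sum_mul]
  have hprod : ∀ a b : ℝ, ((1 : Matrix (Fin m) (Fin m) ℝ) + a • V) * (1 + b • V)
      = 1 + (a + b + a * b * s) • V := by
    intro a b
    simp only [Matrix.mul_add, Matrix.add_mul, Matrix.one_mul, Matrix.mul_one,
      Matrix.mul_smul, Matrix.smul_mul, hVV, smul_smul]
    module
  set P : Matrix (Fin m) (Fin m) ℝ := 1 + t • V with hP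
  have hPA : ∀ i j, (P * A) i j = A i j + t * c j := by
    intro i j
    rw [hP, Matrix.add_mul, Matrix.one_mul, Matrix.smul_mul]
    simp [hV, Matrix.mul_apply, vecMulVec_apply, hc, Finset.mul_sum]
  refine ⟨P, ?_, ?_, ?_⟩
  · set b : ℝ := -t / (1 + t * s) with hb
    have hPQ : P * (1 + b • V) = 1 := by
      rw [hP, hprod]
      have : t + b + t * b * s = 0 := by
        rw [hb]; field_simp; ring
      rw [this]
      simp
    exact ⟨⟨P, 1 + b • V, hPQ, mul_eq_one_comm.mp hPQ⟩, rfl⟩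
  · intro i j
    rw [hPA]
    exact (hpos t htge i j).le
  · intro j
    have hm : Nonempty (Fin m) := by
      rcases isEmpty_or_nonempty (Fin m) with h | h
      · exact absurd (hy j) (by simp)
      · exact h
    obtain ⟨i⟩ := hm
    refine ⟨i, ?_⟩
    rw [hPA]
    exact (hpos t htge i j).ne'
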